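/- arXiv:2509.05782 — 3 statements merged into one kernel-verified Lean document; each statement's English description precedes it below -/
import Mathlib

section
/- Let Ω ⊆ ℝ^d be a bounded measurable set of positive measure and suppose {exp(2πi λ·x) : λ ∈ Λ} is an orthogonal basis of L²(Ω). Then for every t ∈ ℝ^d, ∑_{λ∈Λ} |1̂_Ω(t − λ)|² = vol(Ω)², where 1̂_Ω(ξ) = ∫_Ω exp(−2πi ξ·x) dx. In other words, the function |1̂_Ω|² tiles ℝ^d with translation set Λ at level vol(Ω)². -/
open MeasureTheory Complex Real

section aux
variable {d : ℕ}

private noncomputable def expFn (l : EuclideanSpace ℝ (Fin d)) :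
    EuclideanSpace ℝ (Fin d) → ℂ :=
  fun x => Complex.exp (2 * Real.pi * Complex.I * (inner ℝ l x : ℝ))

private lemma expFn_cont (l : EuclideanSpace ℝ (Fin d)) : Continuous (expFn l) :=
  Complex.continuous_exp.comp ((continuous_const.mul
    (Complex.continuous_ofReal.comp (Continuous.inner continuous_const continuous_id))))

private lemma expFn_memℒp (l : EuclideanSpace ℝ (Fin d))
    (μ : Measure (EuclideanSpace ℝ (Fin d))) [IsFiniteMeasure μ] :
    MemLp (expFn l) 2 μ :=
  MemLp.of_bound (expFn_cont l).aestronglyMeasurable 1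
    (ae_of_all _ fun x => by simp [expFn, Complex.norm_exp])

private lemma conj_expFn_mul (l m x : EuclideanSpace ℝ (Fin d)) :
    (starRingEnd ℂ) (expFn l x) * expFn m x =
      Complex.exp (-(2 * Real.pi * Complex.I * (inner ℝ (l - m) x : ℝ))) := by
  simp only [expFn, ← Complex.exp_conj, ← Complex.exp_add]
  congr 1
  simp only [map_mul, Complex.conj_I, Complex.conj_ofReal, map_ofNat,
    inner_sub_left, Complex.ofReal_sub]
  ring

end aux

/-- If `E(Λ)` is an orthogonal basis of `L²(Ω)` then `|1̂_Ω|²` tiles `ℝ^d` with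
translation set `Λ` at level `vol(Ω)²`. -/
theorem stmt2 (d : ℕ) (Ω : Set (EuclideanSpace ℝ (Fin d)))
    (hmeas : MeasurableSet Ω) (hbdd : Bornology.IsBounded Ω)
    (hpos : 0 < volume Ω) (Λ : Set (EuclideanSpace ℝ (Fin d)))
    (horth : ∀ l ∈ Λ, ∀ m ∈ Λ, l ≠ m →
      ∫ x in Ω, Complex.exp (2 * Real.pi * Complex.I * (inner ℝ l x : ℝ)) *
        (starRingEnd ℂ) (Complex.exp (2 * Real.pi * Complex.I * (inner ℝ m x : ℝ))) = 0)
    (hcomplete : ∀ f : EuclideanSpace ℝ (Fin d) → ℂ, MemLp f 2 (volume.restrict Ω) →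
      (∀ l ∈ Λ, ∫ x in Ω, f x *
        (starRingEnd ℂ) (Complex.exp (2 * Real.pi * Complex.I * (inner ℝ l x : ℝ))) = 0) →
      f =ᵐ[volume.restrict Ω] 0) :
    ∀ t : EuclideanSpace ℝ (Fin d),
      ∑' l : Λ, ‖∫ x in Ω, Complex.exp
          (-(2 * Real.pi * Complex.I * (inner ℝ (t - (l : EuclideanSpace ℝ (Fin d))) x : ℝ)))‖ ^ 2
        = ((volume Ω).toReal) ^ 2 := by
  intro t
  set μ := volume.restrict Ω with hμ
  haveI : Fact (volume Ω < ⊤) := ⟨hbdd.measure_lt_top⟩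
  haveI : IsFiniteMeasure μ := by rw [hμ]; infer_instance
  set c : ℝ := (volume Ω).toReal with hcdef
  have hc : 0 < c := ENNReal.toReal_pos hpos.ne' hbdd.measure_lt_top.ne
  -- the Lp elements
  set E : Λ → Lp ℂ 2 μ := fun l => (expFn_memℒp (l : EuclideanSpace ℝ (Fin d)) μ).toLp _ with hE
  -- inner products of toLp's
  have hinner : ∀ (a b : EuclideanSpace ℝ (Fin d))
      (ha : MemLp (expFn a) 2 μ) (hb : MemLp (expFn b) 2 μ),
      (inner ℂ (ha.toLp _) (hb.toLp _) : ℂ) =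
        ∫ x in Ω, Complex.exp (-(2 * Real.pi * Complex.I * (inner ℝ (a - b) x : ℝ))) := by
    intro a b ha hb
    rw [MeasureTheory.L2.inner_def]
    have := (ha.coeFn_toLp).and (hb.coeFn_toLp)
    refine integral_congr_ae (this.mono fun x hx => ?_)
    simp only [RCLike.inner_apply, hx.1, hx.2]
    rw [mul_comm]
    exact conj_expFn_mul a b x
  -- inner of E with itself
  have hEself : ∀ l : Λ, (inner ℂ (E l) (E l) : ℂ) = (c : ℂ) := by
    intro l
    rw [hE]
    rw [hinner _ _ _ _]
    simp
    rfl
  -- E is pairwise orthogonal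
  have hEorth : ∀ l m : Λ, l ≠ m → (inner ℂ (E l) (E m) : ℂ) = 0 := by
    intro l m hlm
    have h0 := horth (l : EuclideanSpace ℝ (Fin d)) l.2 (m : EuclideanSpace ℝ (Fin d)) m.2
      (fun h => hlm (Subtype.ext h))
    have : (inner ℂ (E l) (E m) : ℂ) =
        (starRingEnd ℂ) (∫ x, Complex.exp (2 * Real.pi * Complex.I *
            (inner ℝ (l : EuclideanSpace ℝ (Fin d)) x : ℝ)) *
          (starRingEnd ℂ) (Complex.exp (2 * Real.pi * Complex.I *
            (inner ℝ (m : EuclideanSpace ℝ (Fin d)) x : ℝ))) ∂μ) := by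
      rw [hE]
      rw [MeasureTheory.L2.inner_def, ← integral_conj]
      have := ((expFn_memℒp (l : EuclideanSpace ℝ (Fin d)) μ).coeFn_toLp).and
        ((expFn_memℒp (m : EuclideanSpace ℝ (Fin d)) μ).coeFn_toLp)
      refine integral_congr_ae (this.mono fun x hx => ?_)
      simp only [RCLike.inner_apply, hx.1, hx.2, map_mul, RingHom.id_apply,
        RingHomCompTriple.comp_apply, Complex.conj_conj, expFn]
      exact mul_comm _ _
    rw [this, h0, map_zero]
  -- normalized family
  set v : Λ → Lp ℂ 2 μ := fun l => ((Real.sqrt c)⁻¹ : ℂ) • E l with hv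
  have hon : Orthonormal ℂ v := by
    classical
    rw [orthonormal_iff_ite]
    intro l m
    by_cases hlm : l = m
    · subst hlm
      rw [if_pos rfl, hv]
      simp only [inner_smul_left, inner_smul_right, hEself l, map_inv₀, Complex.conj_ofReal]
      norm_cast
      rw [← mul_assoc, ← mul_inv, Real.mul_self_sqrt hc.le, inv_mul_cancel₀ hc.ne']
    · simp [hv, inner_smul_left, inner_smul_right, hEorth l m hlm, hlm]
  -- completeness
  have hsp : (Submodule.span ℂ (Set.range v))ᗮ = ⊥ := by
    rw [Submodule.eq_bot_iff]
    intro g hg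
    have hg' : ∀ l : Λ, (inner ℂ (E l) g : ℂ) = 0 := by
      intro l
      have hvg : (inner ℂ (v l) g : ℂ) = 0 :=
        hg _ (Submodule.subset_span ⟨l, rfl⟩)
      rw [hv] at hvg
      simp only [inner_smul_left, mul_eq_zero] at hvg
      rcases hvg with h | h
      · exfalso
        rw [map_eq_zero] at h
        exact (inv_ne_zero (by exact_mod_cast (Real.sqrt_pos.2 hc).ne')) (by exact_mod_cast h)
      · exact h
    have hgz : (g : EuclideanSpace ℝ (Fin d) → ℂ) =ᵐ[μ] 0 := by
      apply hcomplete _ (Lp.memLp g)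
      intro l hl
      have := hg' ⟨l, hl⟩
      rw [hE, MeasureTheory.L2.inner_def] at this
      rw [← this]
      have hae := (expFn_memℒp l μ).coeFn_toLp
      refine integral_congr_ae (hae.mono fun x hx => ?_)
      simp only [RCLike.inner_apply, hx, expFn]
    exact Lp.eq_zero_iff_ae_eq_zero.2 hgz
  -- Hilbert basis
  let b : HilbertBasis Λ ℂ (Lp ℂ 2 μ) := HilbertBasis.mkOfOrthogonalEqBot hon hsp
  have hb : ⇑b = v := HilbertBasis.coe_mkOfOrthogonalEqBot hon hsp
  -- the exponential with frequency t
  set F : Lp ℂ 2 μ := (expFn_memℒp t μ).toLp _ with hF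
  have hFF : (inner ℂ F F : ℂ) = (c : ℂ) := by
    rw [hF, hinner]
    simp [hcdef]
    rfl
  have hsum := b.hasSum_inner_mul_inner F F
  rw [hFF] at hsum
  have hterm : ∀ l : Λ, (inner ℂ F (b l) : ℂ) * (inner ℂ (b l) F : ℂ) =
      ((c⁻¹ * ‖∫ x in Ω, Complex.exp (-(2 * Real.pi * Complex.I *
        (inner ℝ (t - (l : EuclideanSpace ℝ (Fin d))) x : ℝ)))‖ ^ 2 : ℝ) : ℂ) := by
    intro l
    have h1 : (inner ℂ F (b l) : ℂ) = ((Real.sqrt c)⁻¹ : ℂ) *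
        ∫ x in Ω, Complex.exp (-(2 * Real.pi * Complex.I *
          (inner ℝ (t - (l : EuclideanSpace ℝ (Fin d))) x : ℝ))) := by
      rw [hb, hv]
      simp only [inner_smul_right]
      rw [hF, hE]
      rw [hinner]
    have h2 : (inner ℂ (b l) F : ℂ) = (starRingEnd ℂ) (inner ℂ F (b l) : ℂ) := by
      rw [← inner_conj_symm]
    rw [h2, Complex.mul_conj]
    congr 1
    rw [h1, map_mul, ← Complex.ofReal_inv, Complex.normSq_ofReal,
      Complex.normSq_eq_norm_sq, ← mul_inv, Real.mul_self_sqrt hc.le]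
  have hsum2 : HasSum (fun l : Λ => (c⁻¹ * ‖∫ x in Ω, Complex.exp
      (-(2 * Real.pi * Complex.I *
        (inner ℝ (t - (l : EuclideanSpace ℝ (Fin d))) x : ℝ)))‖ ^ 2 : ℝ)) c := by
    rw [← Complex.hasSum_ofReal]
    simp only [← hterm]
    exact hsum
  have hsum3 := hsum2.mul_left c
  have heq : ∀ l : Λ, c * (c⁻¹ * ‖∫ x in Ω, Complex.exp
      (-(2 * Real.pi * Complex.I *
        (inner ℝ (t - (l : EuclideanSpace ℝ (Fin d))) x : ℝ)))‖ ^ 2 : ℝ) =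
      ‖∫ x in Ω, Complex.exp (-(2 * Real.pi * Complex.I *
        (inner ℝ (t - (l : EuclideanSpace ℝ (Fin d))) x : ℝ)))‖ ^ 2 := by
    intro l
    rw [← mul_assoc, mul_inv_cancel₀ hc.ne', one_mul]
  simp only [heq] at hsum3
  rw [sq]
  exact hsum3.tsum_eq
end

section
/- The triangle T with vertices (0,0), (1,0), (0,1) is not spectral: there is no set Λ ⊆ ℝ² such that {exp(2πi λ·x) : λ ∈ Λ} is an orthogonal basis of L²(T). -/
open MeasureTheory Complex Real Set intervalIntegral

noncomputable section

namespace TriNS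

def T : Set (ℝ × ℝ) := {q | 0 < q.1 ∧ 0 < q.2 ∧ q.1 + q.2 < 1}

lemma isOpen_T : IsOpen T := by
  have h1 : IsOpen {q : ℝ × ℝ | 0 < q.1} := isOpen_lt continuous_const continuous_fst
  have h2 : IsOpen {q : ℝ × ℝ | 0 < q.2} := isOpen_lt continuous_const continuous_snd
  have h3 : IsOpen {q : ℝ × ℝ | q.1 + q.2 < 1} :=
    isOpen_lt (continuous_fst.add continuous_snd) continuous_const
  have : T = {q : ℝ × ℝ | 0 < q.1} ∩ ({q : ℝ × ℝ | 0 < q.2} ∩ {q : ℝ × ℝ | q.1 + q.2 < 1}) := by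
    ext q; simp [T, and_assoc]
  rw [this]
  exact h1.inter (h2.inter h3)

lemma measurableSet_T : MeasurableSet T := isOpen_T.measurableSet

lemma T_subset : T ⊆ Icc (0,0) ((1:ℝ),(1:ℝ)) := by
  rintro ⟨x, y⟩ ⟨hx, hy, hxy⟩
  simp only [Icc, Prod.mk_le_mk, mem_setOf_eq]
  constructor
  · exact ⟨hx.le, hy.le⟩
  · exact ⟨by dsimp at *; linarith, by dsimp at *; linarith⟩

lemma integrableOn_T {f : ℝ × ℝ → ℂ} (hf : Continuous f) : IntegrableOn f T := by
  have : IntegrableOn f (Icc (0,0) ((1:ℝ),(1:ℝ))) :=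
    hf.continuousOn.integrableOn_compact isCompact_Icc
  exact this.mono_set T_subset

lemma integral_T (f : ℝ × ℝ → ℂ) (hf : Continuous f) :
    ∫ p in T, f p = ∫ x in (0:ℝ)..1, ∫ y in (0:ℝ)..(1-x), f (x, y) := by
  have hint : Integrable (T.indicator f) := by
    rw [integrable_indicator_iff measurableSet_T]; exact integrableOn_T hf
  rw [← MeasureTheory.integral_indicator measurableSet_T]
  rw [Measure.volume_eq_prod] at hint ⊢
  rw [integral_prod _ hint]
  have key : ∀ x : ℝ,
      (∫ y, T.indicator f (x, y)) =
        (Ioo (0:ℝ) 1).indicator (fun x' => ∫ y in Ioo (0:ℝ) (1-x'), f (x', y)) x := by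
    intro x
    by_cases hx : x ∈ Ioo (0:ℝ) 1
    · have : (fun y => T.indicator f (x, y)) = (Ioo (0:ℝ) (1-x)).indicator (fun y => f (x, y)) := by
        funext y
        by_cases hy : y ∈ Ioo (0:ℝ) (1-x)
        · rw [indicator_of_mem hy]
          have : (x, y) ∈ T := ⟨hx.1, hy.1, by have := hy.2; dsimp; linarith⟩
          rw [indicator_of_mem this]
        · rw [indicator_of_notMem hy]
          have : (x, y) ∉ T := by
            intro ⟨h1, h2, h3⟩
            exact hy ⟨h2, by dsimp at h3; linarith⟩
          rw [indicator_of_notMem this]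
      rw [this, MeasureTheory.integral_indicator measurableSet_Ioo, indicator_of_mem hx]
    · have : (fun y => T.indicator f (x, y)) = fun _ => 0 := by
        funext y
        have : (x, y) ∉ T := by
          intro ⟨h1, h2, h3⟩
          dsimp at h1 h2 h3
          simp only [mem_Ioo, not_and, not_lt] at hx
          rcases lt_or_ge 0 x with h | h
          · linarith [hx h]
          · linarith
        rw [indicator_of_notMem this]
      rw [this, MeasureTheory.integral_zero, indicator_of_notMem hx]
  rw [integral_congr_ae (Filter.Eventually.of_forall key)]
  rw [MeasureTheory.integral_indicator measurableSet_Ioo]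
  rw [← integral_Ioc_eq_integral_Ioo, ← intervalIntegral.integral_of_le (by norm_num : (0:ℝ) ≤ 1)]
  apply intervalIntegral.integral_congr
  intro x hx
  rw [uIcc_of_le (by norm_num : (0:ℝ) ≤ 1)] at hx
  show (∫ y in Ioo (0:ℝ) (1-x), f (x, y)) = _
  rw [← integral_Ioc_eq_integral_Ioo, ← intervalIntegral.integral_of_le (by linarith [hx.2] : (0:ℝ) ≤ 1 - x)]


def K (a : ℝ) : ℂ := 2 * π * Complex.I * a

lemma K_ne_zero {a : ℝ} (ha : a ≠ 0) : K a ≠ 0 := by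
  apply mul_ne_zero
  apply mul_ne_zero
  apply mul_ne_zero
  · norm_num
  · exact_mod_cast Real.pi_ne_zero
  · exact Complex.I_ne_zero
  · exact_mod_cast ha

lemma K_sub (a b : ℝ) : K (a - b) = K a - K b := by simp [K]; ring

def Fc (a b : ℝ) : ℂ := ∫ p in T, Complex.exp (K a * p.1 + K b * p.2)

lemma cont_exp (a b : ℝ) : Continuous fun p : ℝ × ℝ => Complex.exp (K a * p.1 + K b * p.2) := by
  fun_prop

lemma Fc_iter (a b : ℝ) :
    Fc a b = ∫ x in (0:ℝ)..1, ∫ y in (0:ℝ)..(1-x), Complex.exp (K a * x + K b * y) :=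
  integral_T _ (cont_exp a b)

lemma inner_int {b : ℝ} (hb : b ≠ 0) (c : ℂ) (L : ℝ) :
    ∫ y in (0:ℝ)..L, Complex.exp (c + K b * y)
      = Complex.exp c * (Complex.exp (K b * L) - 1) / K b := by
  simp_rw [Complex.exp_add]
  rw [intervalIntegral.integral_const_mul, integral_exp_mul_complex (K_ne_zero hb)]
  simp [mul_div_assoc]

lemma Fc_of_b_ne (a b : ℝ) (hb : b ≠ 0) :
    Fc a b = (∫ x in (0:ℝ)..1,
      (Complex.exp (K b) * Complex.exp (K (a-b) * x) - Complex.exp (K a * x))) / K b := by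
  rw [Fc_iter, ← intervalIntegral.integral_div]
  apply intervalIntegral.integral_congr
  intro x _
  show (∫ y in (0:ℝ)..(1-x), Complex.exp (K a * x + K b * y)) = _
  rw [inner_int hb (K a * x) (1-x)]
  have h1 : K a * x + K b * ((1-x:ℝ):ℂ) = K b + K (a-b) * x := by
    rw [K_sub]; push_cast; ring
  show Complex.exp (K a * ↑x) * (Complex.exp (K b * ((1-x:ℝ):ℂ)) - 1) / K b = _
  rw [mul_sub, mul_one, ← Complex.exp_add, h1, Complex.exp_add]

lemma Fc_main {a b : ℝ} (ha : a ≠ 0) (hb : b ≠ 0) (hab : a ≠ b) :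
    Fc a b = (Complex.exp (K b) * ((Complex.exp (K (a-b)) - 1) / K (a-b))
       - (Complex.exp (K a) - 1) / K a) / K b := by
  rw [Fc_of_b_ne a b hb]
  congr 1
  rw [intervalIntegral.integral_sub ((by fun_prop : Continuous fun x:ℝ => Complex.exp (K b) * Complex.exp (K (a-b) * x)).intervalIntegrable 0 1) ((by fun_prop : Continuous fun x:ℝ => Complex.exp (K a * x)).intervalIntegrable 0 1)]
  rw [intervalIntegral.integral_const_mul, integral_exp_mul_complex (K_ne_zero (sub_ne_zero.mpr hab)), integral_exp_mul_complex (K_ne_zero ha)]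
  simp [mul_div_assoc]

lemma Fc_diag {b : ℝ} (hb : b ≠ 0) :
    Fc b b = (Complex.exp (K b) - (Complex.exp (K b) - 1) / K b) / K b := by
  rw [Fc_of_b_ne b b hb]
  congr 1
  have : ∀ x : ℝ, Complex.exp (K b) * Complex.exp (K (b-b) * x) - Complex.exp (K b * x)
      = Complex.exp (K b) - Complex.exp (K b * x) := by
    intro x; simp [K]
  simp_rw [this]
  rw [intervalIntegral.integral_sub (intervalIntegrable_const) ((by fun_prop : Continuous fun x:ℝ => Complex.exp (K b * x)).intervalIntegrable 0 1)]
  rw [integral_exp_mul_complex (K_ne_zero hb)]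
  simp

lemma Fc_zero_left {b : ℝ} (hb : b ≠ 0) :
    Fc 0 b = ((Complex.exp (K b) - 1) / K b - 1) / K b := by
  rw [Fc_of_b_ne 0 b hb]
  congr 1
  have : ∀ x : ℝ, Complex.exp (K b) * Complex.exp (K (0-b) * x) - Complex.exp (K 0 * x)
      = Complex.exp (K b) * Complex.exp ((- K b) * x) - 1 := by
    intro x
    have : K (0 - b) = - K b := by rw [K_sub]; simp [K]
    simp [this, K]
  simp_rw [this]
  rw [intervalIntegral.integral_sub ((by fun_prop : Continuous fun x:ℝ => Complex.exp (K b) * Complex.exp ((-K b) * x)).intervalIntegrable 0 1) intervalIntegrable_const]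
  rw [intervalIntegral.integral_const_mul, integral_exp_mul_complex (neg_ne_zero.mpr (K_ne_zero hb))]
  have hKb := K_ne_zero hb
  simp only [mul_zero, Complex.exp_zero, intervalIntegral.integral_const, smul_eq_mul,
    Complex.ofReal_one, Complex.ofReal_zero, mul_one, neg_mul, neg_zero, Complex.exp_zero]
  rw [Complex.exp_neg]
  have he := Complex.exp_ne_zero (K b)
  field_simp
  simp only [sub_zero, one_smul]
  ring

lemma Fc_zero_zero : Fc 0 0 = 1/2 := by
  rw [Fc_iter]
  have : ∀ x : ℝ, (∫ y in (0:ℝ)..(1-x), Complex.exp (K 0 * x + K 0 * y)) = ((1 - x : ℝ) : ℂ) := by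
    intro x; simp [K]
  simp_rw [this]
  have : ∀ x : ℝ, ((1 - x : ℝ) : ℂ) = (1:ℂ) - (x:ℝ) := by intro x; push_cast; ring
  simp_rw [this]
  rw [intervalIntegral.integral_sub intervalIntegrable_const ((by fun_prop : Continuous fun x:ℝ => ((x:ℝ):ℂ)).intervalIntegrable 0 1)]
  rw [intervalIntegral.integral_const, integral_ofReal]
  simp [integral_id]
  norm_num


lemma Fc_symm (a b : ℝ) : Fc a b = Fc b a := by
  have hT : Prod.swap ⁻¹' T = T := by
    ext ⟨x, y⟩
    simp only [mem_preimage, Prod.swap_prod_mk, T, mem_setOf_eq]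
    constructor <;> rintro ⟨h1, h2, h3⟩ <;> exact ⟨h2, h1, by linarith⟩
  have hmp : MeasurePreserving (Prod.swap : ℝ × ℝ → ℝ × ℝ) volume volume := by
    rw [Measure.volume_eq_prod]
    exact Measure.measurePreserving_swap
  have hemb : MeasurableEmbedding (Prod.swap : ℝ × ℝ → ℝ × ℝ) :=
    MeasurableEquiv.prodComm.measurableEmbedding
  have := hmp.setIntegral_preimage_emb hemb
    (fun p : ℝ × ℝ => Complex.exp (K b * p.1 + K a * p.2)) T
  rw [hT] at this
  calc Fc a b = ∫ x in T, Complex.exp (K b * (x.swap.1:ℝ) + K a * (x.swap.2:ℝ)) := by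
        unfold Fc
        congr 1
        funext p
        rw [Prod.fst_swap, Prod.snd_swap, add_comm]
    _ = Fc b a := this

lemma half_sub_ne {m : ℤ} : (1/2 : ℝ) - m ≠ 0 := by
  intro h
  have h2 : (2*m : ℝ) = 1 := by linarith
  have : (2*m : ℤ) = 1 := by exact_mod_cast h2
  omega

lemma exp_K_int (m : ℤ) : Complex.exp (K (m:ℝ)) = 1 := by
  have : K (m:ℝ) = (m:ℂ) * (2 * π * Complex.I) := by simp [K]; ring
  rw [this, Complex.exp_int_mul_two_pi_mul_I]

lemma exp_K_half_sub (m : ℤ) : Complex.exp (K ((1/2:ℝ) - m)) = -1 := by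
  have h : K ((1/2:ℝ) - m) = (π:ℂ) * Complex.I + (-m:ℤ) * (2 * π * Complex.I) := by
    simp [K]; push_cast; ring
  rw [h, Complex.exp_add, Complex.exp_int_mul_two_pi_mul_I, Complex.exp_pi_mul_I]
  ring

lemma hpiC : (π:ℂ) ≠ 0 := by exact_mod_cast Real.pi_ne_zero

lemma val_diag : Fc (1/2) (1/2) = ((-2/π^2 : ℝ) : ℂ) + ((1/π : ℝ) : ℂ) * Complex.I := by
  rw [Fc_diag (by norm_num)]
  have hK : K (1/2) = (π:ℂ) * Complex.I := by simp [K]; ring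
  rw [hK, Complex.exp_pi_mul_I]
  have hI := Complex.I_ne_zero
  have hπ := hpiC
  field_simp
  push_cast
  field_simp
  linear_combination (2 - (π:ℂ)*Complex.I) * Complex.I_sq

lemma val_off {m n : ℤ} (hmn : m ≠ n) :
    Fc ((1/2:ℝ) - m) ((1/2:ℝ) - n)
      = ((-1 / (2*π^2*((1/2:ℝ)-m)*((1/2:ℝ)-n)) : ℝ) : ℂ) := by
  have ha : (1/2:ℝ) - m ≠ 0 := half_sub_ne
  have hb : (1/2:ℝ) - n ≠ 0 := half_sub_ne
  have hab : (1/2:ℝ) - m ≠ (1/2:ℝ) - n := by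
    intro h; apply hmn; have : (m:ℝ) = n := by linarith
    exact_mod_cast this
  rw [Fc_main ha hb hab]
  have hd : ((1/2:ℝ) - m) - ((1/2:ℝ) - n) = ((n - m : ℤ) : ℝ) := by push_cast; ring
  rw [hd, exp_K_int, exp_K_half_sub, exp_K_half_sub]
  simp only [sub_self, zero_div, mul_zero]
  have hKa := K_ne_zero ha
  have hKb := K_ne_zero hb
  have hπ := Real.pi_ne_zero
  have hprod : K ((1/2:ℝ)-m) * K ((1/2:ℝ)-n)
      = ((-4*π^2*((1/2:ℝ)-m)*((1/2:ℝ)-n) : ℝ) : ℂ) := by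
    simp only [K]; push_cast
    linear_combination (4*(π:ℂ)^2*((1:ℂ)/2-(m:ℂ))*((1:ℂ)/2-(n:ℂ))) * Complex.I_sq
  have h2 : (0 - (-1 - 1 : ℂ) / K ((1/2:ℝ)-m)) / K ((1/2:ℝ)-n)
      = 2 / (K ((1/2:ℝ)-m) * K ((1/2:ℝ)-n)) := by
    ring
  rw [h2, hprod]
  rw [show ((2:ℂ)) = (((2:ℝ)):ℂ) by norm_num, ← Complex.ofReal_div]
  congr 1
  have h3 : (-4*π^2*((1/2:ℝ)-m)*((1/2:ℝ)-n)) ≠ 0 := by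
    intro hc
    rcases mul_eq_zero.mp hc with hc1 | hc1
    · rcases mul_eq_zero.mp hc1 with hc2 | hc2
      · rcases mul_eq_zero.mp hc2 with hc3 | hc3
        · norm_num at hc3
        · exact pow_ne_zero 2 hπ hc3
      · exact ha hc2
    · exact hb hc1
  have h4 : (2*π^2*((1/2:ℝ)-m)*((1/2:ℝ)-n)) ≠ 0 := by
    intro hc
    rcases mul_eq_zero.mp hc with hc1 | hc1
    · rcases mul_eq_zero.mp hc1 with hc2 | hc2
      · rcases mul_eq_zero.mp hc2 with hc3 | hc3
        · norm_num at hc3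
        · exact pow_ne_zero 2 hπ hc3
      · exact ha hc2
    · exact hb hc1
  rw [div_eq_div_iff h3 h4]
  ring


lemma K_eq (a : ℝ) : K a = ((2 * π * a : ℝ) : ℂ) * Complex.I := by
  simp [K]; ring

lemma exp_K_re (a : ℝ) : (Complex.exp (K a)).re = Real.cos (2*π*a) := by
  rw [K_eq]; exact Complex.exp_ofReal_mul_I_re _

lemma exp_K_im (a : ℝ) : (Complex.exp (K a)).im = Real.sin (2*π*a) := by
  rw [K_eq]; exact Complex.exp_ofReal_mul_I_im _

lemma normSq_exp_K (a : ℝ) : Complex.normSq (Complex.exp (K a)) = 1 := by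
  rw [Complex.normSq_apply, exp_K_re, exp_K_im]
  nlinarith [Real.sin_sq_add_cos_sq (2*π*a)]

lemma twopib_zero {b : ℝ} (h : (2*π*b)^2 = 0) : b = 0 := by
  have h1 : 2*π*b = 0 := pow_eq_zero_iff two_ne_zero |>.mp h
  have hpi := Real.pi_ne_zero
  rcases mul_eq_zero.mp h1 with h2 | h2
  · rcases mul_eq_zero.mp h2 with h3 | h3
    · norm_num at h3
    · exact absurd h3 hpi
  · exact h2

lemma cos_int {a : ℝ} (h : Real.cos (2*π*a) = 1) : ∃ m : ℤ, a = m := by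
  rcases (Real.cos_eq_one_iff _).1 h with ⟨n, hn⟩
  refine ⟨n, ?_⟩
  have h2 : (2*π) * ((n:ℝ) - a) = 0 := by linarith
  rcases mul_eq_zero.mp h2 with h3 | h3
  · have hpi := Real.pi_ne_zero
    rcases mul_eq_zero.mp h3 with h4 | h4
    · norm_num at h4
    · exact absurd h4 hpi
  · linarith

/-- exp(K b) = 1 + K b is impossible for b ≠ 0 -/
lemma no_sol1 {b : ℝ} (hb : b ≠ 0) (h : Complex.exp (K b) = 1 + K b) : False := by
  have h2 : Complex.normSq (Complex.exp (K b)) = Complex.normSq (1 + K b) := by rw [h]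
  have h4 : Complex.normSq (1 + K b) = 1 + (2*π*b)^2 := by
    rw [K_eq]
    simp [Complex.normSq_apply]
    ring
  rw [normSq_exp_K, h4] at h2
  exact hb (twopib_zero (by linarith))

/-- exp(K b) * (K b - 1) = -1 is impossible for b ≠ 0 -/
lemma no_sol2 {b : ℝ} (hb : b ≠ 0) (h : Complex.exp (K b) * (K b - 1) = -1) : False := by
  have h2 : Complex.normSq (Complex.exp (K b)) * Complex.normSq (K b - 1) = 1 := by
    rw [← Complex.normSq_mul, h]; simp
  have h4 : Complex.normSq (K b - 1) = 1 + (2*π*b)^2 := by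
    rw [K_eq]; simp [Complex.normSq_apply]; ring
  rw [normSq_exp_K, h4, one_mul] at h2
  exact hb (twopib_zero (by linarith))

lemma Fc_nonzero_deg1 {b : ℝ} (hb : b ≠ 0) : Fc 0 b ≠ 0 := by
  intro h
  rw [Fc_zero_left hb] at h
  have hK := K_ne_zero hb
  apply no_sol1 hb
  field_simp at h
  linear_combination h

lemma Fc_nonzero_diag {b : ℝ} (hb : b ≠ 0) : Fc b b ≠ 0 := by
  intro h
  rw [Fc_diag hb] at h
  have hK := K_ne_zero hb
  apply no_sol2 hb
  field_simp at h
  linear_combination h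

/-- the main zero-set lemma -/
lemma Fc_zero_imp {a b : ℝ} (h : Fc a b = 0) :
    (∃ m : ℤ, a = m) ∧ (∃ n : ℤ, b = n) ∧ a ≠ 0 ∧ b ≠ 0 ∧ a ≠ b := by
  -- degenerate cases
  by_cases ha : a = 0
  · subst ha
    by_cases hb : b = 0
    · subst hb; rw [Fc_zero_zero] at h; norm_num at h
    · exact absurd h (Fc_nonzero_deg1 hb)
  by_cases hb : b = 0
  · subst hb; rw [Fc_symm] at h; exact absurd h (Fc_nonzero_deg1 ha)
  by_cases hab : a = b
  · subst hab; exact absurd h (Fc_nonzero_diag ha)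
  -- main case
  refine ⟨?_, ?_, ha, hb, hab⟩ <;>
  · have hKa := K_ne_zero ha
    have hKb := K_ne_zero hb
    have hKab := K_ne_zero (sub_ne_zero.mpr hab)
    rw [Fc_main ha hb hab] at h
    have hu : Complex.exp (K a) = Complex.exp (K b) * Complex.exp (K (a-b)) := by
      rw [← Complex.exp_add]; congr 1; rw [K_sub]; ring
    have E0 : (b:ℂ) * Complex.exp (K a) - (a:ℂ) * Complex.exp (K b) + ((a:ℂ) - (b:ℂ)) = 0 := by
      field_simp at h
      have h2 : Complex.exp (K b) * ((Complex.exp (K (a-b)) - 1)) * K a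
          = (Complex.exp (K a) - 1) * K (a-b) := by linear_combination h
      have hKsub := K_sub a b
      have step1 : Complex.exp (K a) * K a - Complex.exp (K b) * K a
          - Complex.exp (K a) * K (a-b) + K (a-b) = 0 := by
        linear_combination h2 + K a * hu
      have h3 : (2*(π:ℂ)*Complex.I) * ((b:ℂ) * Complex.exp (K a) - (a:ℂ) * Complex.exp (K b) + ((a:ℂ) - (b:ℂ))) = 0 := by
        simp only [K] at step1 ⊢
        push_cast at step1 ⊢
        linear_combination step1
      have h2pI : (2*(π:ℂ)*Complex.I) ≠ 0 := by
        apply mul_ne_zero (mul_ne_zero two_ne_zero _) Complex.I_ne_zero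
        exact_mod_cast Real.pi_ne_zero
      exact (mul_eq_zero.mp h3).resolve_left h2pI
    -- real and imaginary parts
    have hre : b * Real.cos (2*π*a) - a * Real.cos (2*π*b) + (a - b) = 0 := by
      have := congrArg Complex.re E0
      simpa [exp_K_re, Complex.add_re, Complex.sub_re, Complex.mul_re] using this
    have him : b * Real.sin (2*π*a) - a * Real.sin (2*π*b) = 0 := by
      have := congrArg Complex.im E0
      simpa [exp_K_im, Complex.add_im, Complex.sub_im, Complex.mul_im] using this
    have pyt1 := Real.sin_sq_add_cos_sq (2*π*a)
    have pyt2 := Real.sin_sq_add_cos_sq (2*π*b)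
    first
    | · -- a case : cos (2πa) = 1
        apply cos_int
        have h2 : (b * Real.cos (2*π*a) + (a - b))^2 + (b * Real.sin (2*π*a))^2 = a^2 := by
          have e1 : b * Real.cos (2*π*a) + (a-b) = a * Real.cos (2*π*b) := by linarith
          have e2 : b * Real.sin (2*π*a) = a * Real.sin (2*π*b) := by linarith
          rw [e1, e2]; nlinarith [pyt2]
        have h3 : 2*b*(a-b)*(Real.cos (2*π*a) - 1) = 0 := by
          linear_combination h2 - b^2 * pyt1
        have hne : 2*b*(a-b) ≠ 0 :=
          mul_ne_zero (mul_ne_zero two_ne_zero hb) (sub_ne_zero.mpr hab)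
        have := (mul_eq_zero.mp h3).resolve_left hne
        linarith
    | · -- b case : cos (2πb) = 1
        apply cos_int
        have h2 : (a * Real.cos (2*π*b) - (a - b))^2 + (a * Real.sin (2*π*b))^2 = b^2 := by
          have e1 : a * Real.cos (2*π*b) - (a-b) = b * Real.cos (2*π*a) := by linarith
          have e2 : a * Real.sin (2*π*b) = b * Real.sin (2*π*a) := by linarith
          rw [e1, e2]; nlinarith [pyt1]
        have h3 : 2*a*(a-b)*(Real.cos (2*π*b) - 1) = 0 := by
          linear_combination -h2 + a^2 * pyt2
        have hne : 2*a*(a-b) ≠ 0 :=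
          mul_ne_zero (mul_ne_zero two_ne_zero ha) (sub_ne_zero.mpr hab)
        have := (mul_eq_zero.mp h3).resolve_left hne
        linarith


lemma natsum_sq (n : ℕ) : ∑ j ∈ Finset.range (n+1), (1:ℝ)/((j:ℝ)+1)^2 ≤ 2 - 1/((n:ℝ)+1) := by
  induction n with
  | zero => norm_num
  | succ n ih =>
    rw [Finset.sum_range_succ]
    have hpos : (0:ℝ) < (n:ℝ)+1 := by positivity
    have hpos2 : (0:ℝ) < (n:ℝ)+2 := by positivity
    have h1 : (1:ℝ)/(((n+1:ℕ):ℝ)+1)^2 ≤ 1/((n:ℝ)+1) - 1/((n:ℝ)+1+1) := by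
      push_cast
      rw [div_sub_div _ _ (ne_of_gt hpos) (by positivity), div_le_div_iff₀ (by positivity) (by positivity)]
      nlinarith
    push_cast at ih h1 ⊢
    linarith

lemma natsum_sq' (t : Finset ℕ) : ∑ j ∈ t, (1:ℝ)/((j:ℝ)+1)^2 ≤ 2 := by
  obtain ⟨n, hn⟩ := t.exists_nat_subset_range
  have hsub : ∑ j ∈ t, (1:ℝ)/((j:ℝ)+1)^2 ≤ ∑ j ∈ Finset.range (n+1), (1:ℝ)/((j:ℝ)+1)^2 := by
    apply Finset.sum_le_sum_of_subset_of_nonneg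
    · exact hn.trans (Finset.range_subset_range.mpr (Nat.le_succ n))
    · intro i _ _; positivity
  have := natsum_sq n
  have hpos : (0:ℝ) < (n:ℝ)+1 := by positivity
  have : (0:ℝ) ≤ 1/((n:ℝ)+1) := by positivity
  linarith [natsum_sq n]

lemma natsum_rho (t : Finset ℕ) : ∑ j ∈ t, (1:ℝ)/((2*(j:ℝ)+1)^4) ≤ 11/9 := by
  have key : ∑ j ∈ t.erase 0, (1:ℝ)/((2*(j:ℝ)+1)^4) ≤ 2/9 := by
    have hb : ∀ j ∈ t.erase 0, (1:ℝ)/((2*(j:ℝ)+1)^4) ≤ (1/9) * (1/((j:ℝ)+1)^2) := by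
      intro j hj
      have hj0 : j ≠ 0 := Finset.ne_of_mem_erase hj
      have hj1 : (1:ℝ) ≤ (j:ℝ) := by
        have : 1 ≤ j := Nat.one_le_iff_ne_zero.mpr hj0
        exact_mod_cast this
      have e1 : ((j:ℝ)+1)^2 ≤ (2*(j:ℝ)+1)^2 := by nlinarith
      have e2 : (9:ℝ) ≤ (2*(j:ℝ)+1)^2 := by nlinarith
      have h9 : (9:ℝ)*((j:ℝ)+1)^2 ≤ (2*(j:ℝ)+1)^4 := by nlinarith
      calc (1:ℝ)/((2*(j:ℝ)+1)^4) ≤ 1/((9:ℝ)*((j:ℝ)+1)^2) :=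
            one_div_le_one_div_of_le (by positivity) h9
        _ = (1/9) * (1/((j:ℝ)+1)^2) := (one_div_mul_one_div (9:ℝ) _).symm
    calc ∑ j ∈ t.erase 0, (1:ℝ)/((2*(j:ℝ)+1)^4)
        ≤ ∑ j ∈ t.erase 0, (1/9) * (1/((j:ℝ)+1)^2) := Finset.sum_le_sum hb
      _ = (1/9) * ∑ j ∈ t.erase 0, (1:ℝ)/((j:ℝ)+1)^2 := by rw [Finset.mul_sum]
      _ ≤ (1/9) * 2 := by
          have := natsum_sq' (t.erase 0)
          linarith
      _ = 2/9 := by norm_num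
  by_cases h0 : 0 ∈ t
  · have hsplit := Finset.sum_erase_add t (fun j => (1:ℝ)/((2*(j:ℝ)+1)^4)) h0
    rw [← hsplit]
    have h00 : (1:ℝ)/((2*((0:ℕ):ℝ)+1)^4) = 1 := by norm_num
    simp only [Nat.cast_zero] at h00 ⊢
    rw [h00]
    linarith
  · rw [Finset.erase_eq_of_notMem h0] at key
    linarith

lemma zsum (s : Finset ℤ) : ∑ k ∈ s, (1:ℝ)/((2*(k:ℝ)-1)^4) ≤ 22/9 := by
  classical
  rw [← Finset.sum_filter_add_sum_filter_not s (fun k => k ≤ 0)]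
  have h1 : ∑ k ∈ s.filter (fun k => k ≤ 0), (1:ℝ)/((2*(k:ℝ)-1)^4) ≤ 11/9 := by
    have heq : ∑ k ∈ s.filter (fun k => k ≤ 0), (1:ℝ)/((2*(k:ℝ)-1)^4)
        = ∑ j ∈ ((s.filter (fun k => k ≤ 0)).image (fun k => (-k).toNat) : Finset ℕ),
            (1:ℝ)/((2*(j:ℝ)+1)^4) := by
      rw [Finset.sum_image ?inj]
      case inj =>
        intro x hx y hy hxy
        have hx0 : x ≤ 0 := (Finset.mem_filter.mp hx).2
        have hy0 : y ≤ 0 := (Finset.mem_filter.mp hy).2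
        simp only at hxy
        omega
      apply Finset.sum_congr rfl
      intro k hk
      have hk0 : k ≤ 0 := (Finset.mem_filter.mp hk).2
      have hcast : ((((-k).toNat : ℕ)) : ℝ) = -(k:ℝ) := by
        have h := Int.toNat_of_nonneg (by omega : (0:ℤ) ≤ -k)
        calc ((((-k).toNat : ℕ)) : ℝ) = (((-k).toNat : ℤ) : ℝ) := by push_cast; ring
          _ = ((-k : ℤ) : ℝ) := by rw [h]
          _ = -(k:ℝ) := by push_cast; ring
      rw [hcast]
      ring_nf
    rw [heq]
    exact natsum_rho _
  have h2 : ∑ k ∈ s.filter (fun k => ¬ k ≤ 0), (1:ℝ)/((2*(k:ℝ)-1)^4) ≤ 11/9 := by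
    have heq : ∑ k ∈ s.filter (fun k => ¬ k ≤ 0), (1:ℝ)/((2*(k:ℝ)-1)^4)
        = ∑ j ∈ ((s.filter (fun k => ¬ k ≤ 0)).image (fun k => (k-1).toNat) : Finset ℕ),
            (1:ℝ)/((2*(j:ℝ)+1)^4) := by
      rw [Finset.sum_image ?inj2]
      case inj2 =>
        intro x hx y hy hxy
        have hx0 : ¬ x ≤ 0 := (Finset.mem_filter.mp hx).2
        have hy0 : ¬ y ≤ 0 := (Finset.mem_filter.mp hy).2
        simp only at hxy
        omega
      apply Finset.sum_congr rfl
      intro k hk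
      have hk0 : ¬ k ≤ 0 := (Finset.mem_filter.mp hk).2
      have hcast : ((((k-1).toNat : ℕ)) : ℝ) = (k:ℝ) - 1 := by
        have h := Int.toNat_of_nonneg (by omega : (0:ℤ) ≤ k-1)
        calc ((((k-1).toNat : ℕ)) : ℝ) = (((k-1).toNat : ℤ) : ℝ) := by push_cast; ring
          _ = ((k-1 : ℤ) : ℝ) := by rw [h]
          _ = (k:ℝ) - 1 := by push_cast; ring
      rw [hcast]
      ring_nf
    rw [heq]
    exact natsum_rho _
  linarith


local notation "⟪" x ", " y "⟫" => @inner ℂ _ _ x y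

instance : IsFiniteMeasure (volume.restrict T) := by
  constructor
  rw [Measure.restrict_apply_univ]
  exact lt_of_le_of_lt (measure_mono T_subset) isCompact_Icc.measure_lt_top

def Efun (t : ℝ × ℝ) : ℝ × ℝ → ℂ :=
  fun p => Complex.exp (2 * π * Complex.I * (t.1 * p.1 + t.2 * p.2))

lemma Efun_cont (t : ℝ × ℝ) : Continuous (Efun t) := by
  unfold Efun; fun_prop

lemma Efun_norm (t p : ℝ × ℝ) : ‖Efun t p‖ = 1 := by
  unfold Efun
  rw [Complex.norm_exp]
  have h : 2 * (π:ℂ) * Complex.I * ((t.1:ℂ) * (p.1:ℂ) + (t.2:ℂ) * (p.2:ℂ))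
      = ((2 * π * (t.1 * p.1 + t.2 * p.2) : ℝ) : ℂ) * Complex.I := by
    push_cast; ring
  rw [h]
  simp

lemma Efun_memLp (t : ℝ × ℝ) : MemLp (Efun t) 2 (volume.restrict T) :=
  MemLp.of_bound (Efun_cont t).aestronglyMeasurable 1
    (Filter.Eventually.of_forall fun p => le_of_eq (Efun_norm t p))

def eLp (t : ℝ × ℝ) : Lp ℂ 2 (volume.restrict T) := (Efun_memLp t).toLp _

lemma conj_mul_E (s t p : ℝ × ℝ) :
    (starRingEnd ℂ) (Efun s p) * Efun t p
      = Complex.exp (K (t.1 - s.1) * p.1 + K (t.2 - s.2) * p.2) := by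
  unfold Efun
  rw [← Complex.exp_conj, ← Complex.exp_add]
  congr 1
  simp only [map_mul, map_add, Complex.conj_ofReal, Complex.conj_I, map_ofNat]
  simp only [K]; push_cast; ring

lemma mul_conj_E (l m p : ℝ × ℝ) :
    Efun l p * (starRingEnd ℂ) (Efun m p)
      = Complex.exp (K (l.1 - m.1) * p.1 + K (l.2 - m.2) * p.2) := by
  rw [mul_comm]; exact conj_mul_E m l p

lemma inner_eLp (s t : ℝ × ℝ) : ⟪eLp s, eLp t⟫ = Fc (t.1 - s.1) (t.2 - s.2) := by
  rw [MeasureTheory.L2.inner_def]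
  unfold Fc
  have h1 : ∀ᵐ p ∂(volume.restrict T),
      ⟪(eLp s : ℝ × ℝ → ℂ) p, (eLp t : ℝ × ℝ → ℂ) p⟫
        = Complex.exp (K (t.1 - s.1) * p.1 + K (t.2 - s.2) * p.2) := by
    filter_upwards [(Efun_memLp s).coeFn_toLp, (Efun_memLp t).coeFn_toLp] with p hs ht
    rw [RCLike.inner_apply]
    show (eLp t : ℝ × ℝ → ℂ) p * (starRingEnd ℂ) ((eLp s : ℝ × ℝ → ℂ) p) = _
    unfold eLp
    rw [hs, ht]
    exact mul_conj_E t s p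
  exact MeasureTheory.integral_congr_ae h1

lemma sqrt2C_ne : (((Real.sqrt 2 : ℝ)) : ℂ) ≠ 0 := by
  rw [Complex.ofReal_ne_zero]
  positivity

lemma sqrt2C_sq : (((Real.sqrt 2 : ℝ)) : ℂ) * (((Real.sqrt 2 : ℝ)) : ℂ) = 2 := by
  rw [← Complex.ofReal_mul, Real.mul_self_sqrt (by norm_num : (0:ℝ) ≤ 2)]
  norm_num

lemma term_bound {m n : ℤ} (hmn : m ≠ n) :
    2 * Complex.normSq (Fc ((1/2:ℝ) - m) ((1/2:ℝ) - n))
      ≤ (4/π^4) * (1/((2*(m:ℝ)-1)^4) + 1/((2*(n:ℝ)-1)^4)) := by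
  rw [val_off hmn, Complex.normSq_ofReal]
  have ha : ((1/2:ℝ) - m) ≠ 0 := half_sub_ne
  have hb : ((1/2:ℝ) - n) ≠ 0 := half_sub_ne
  set a := (1/2:ℝ) - m with hadef
  set b := (1/2:ℝ) - n with hbdef
  have hπ : π ≠ 0 := Real.pi_ne_zero
  have hπ4 : (0:ℝ) < π^4 := by positivity
  have h4a : (2*(m:ℝ)-1)^4 = 16*a^4 := by rw [hadef]; ring
  have h4b : (2*(n:ℝ)-1)^4 = 16*b^4 := by rw [hbdef]; ring
  have lhs_eq : 2 * ((-1) / (2*π^2*a*b) * ((-1) / (2*π^2*a*b))) = 1/(2*π^4*a^2*b^2) := by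
    field_simp
  have rhs_eq : (4/π^4) * (1/((2*(m:ℝ)-1)^4) + 1/((2*(n:ℝ)-1)^4))
      = 1/(4*π^4)*(1/a^4 + 1/b^4) := by
    rw [h4a, h4b]
    field_simp
    ring
  rw [show (-1 / (2*π^2*a*b)) * (-1 / (2*π^2*a*b)) = (-1) / (2*π^2*a*b) * ((-1) / (2*π^2*a*b)) from rfl, lhs_eq, rhs_eq]
  have hdiff : 1/(4*π^4)*(1/a^4 + 1/b^4) - 1/(2*π^4*a^2*b^2)
      = (a^2 - b^2)^2 / (4*π^4*a^4*b^4) := by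
    field_simp
    ring
  have hnn : (0:ℝ) ≤ (a^2-b^2)^2 / (4*π^4*a^4*b^4) := by positivity
  linarith

lemma numeric_contra : (8 + 2*π^2)/π^4 + 176/(9*π^4) < 1/2 := by
  have hA : π^2 > 9.85 := by nlinarith [Real.pi_gt_d2]
  have hA0 : (0:ℝ) < π^2 := by positivity
  have h4 : π^4 = (π^2)^2 := by ring
  rw [h4]
  rw [div_add_div _ _ (by positivity) (by positivity), div_lt_iff₀ (by positivity)]
  have key : (0:ℝ) < 4.5*(π^2)^2 - 18*π^2 - 248 := by
    nlinarith [hA, sq_nonneg (π^2 - 9.85)]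
  nlinarith [key, hA0, mul_pos (mul_pos hA0 hA0) key]

set_option maxHeartbeats 1000000 in
theorem stmt9' :
    ¬ ∃ Λ : Set (ℝ × ℝ),
      (∀ l ∈ Λ, ∀ m ∈ Λ, l ≠ m →
        ∫ p in {q : ℝ × ℝ | 0 < q.1 ∧ 0 < q.2 ∧ q.1 + q.2 < 1},
          Complex.exp (2 * Real.pi * Complex.I * (l.1 * p.1 + l.2 * p.2)) *
            (starRingEnd ℂ) (Complex.exp (2 * Real.pi * Complex.I * (m.1 * p.1 + m.2 * p.2)))
          = 0) ∧
      (∀ f : ℝ × ℝ → ℂ,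
        MemLp f 2 (volume.restrict {q : ℝ × ℝ | 0 < q.1 ∧ 0 < q.2 ∧ q.1 + q.2 < 1}) →
        (∀ l ∈ Λ, ∫ p in {q : ℝ × ℝ | 0 < q.1 ∧ 0 < q.2 ∧ q.1 + q.2 < 1},
          f p * (starRingEnd ℂ) (Complex.exp (2 * Real.pi * Complex.I * (l.1 * p.1 + l.2 * p.2)))
          = 0) →
        f =ᵐ[volume.restrict {q : ℝ × ℝ | 0 < q.1 ∧ 0 < q.2 ∧ q.1 + q.2 < 1}] 0) := by
  classical
  rintro ⟨Λ, horth, hcomp⟩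
  -- orthogonality in terms of Fc
  have horthF : ∀ l ∈ Λ, ∀ m ∈ Λ, l ≠ m → Fc (l.1 - m.1) (l.2 - m.2) = 0 := by
    intro l hl m hm hlm
    have h := horth l hl m hm hlm
    rw [← h]
    unfold Fc
    apply setIntegral_congr_fun measurableSet_T
    intro p _
    exact (mul_conj_E l m p).symm
  -- Λ is nonempty
  rcases Set.eq_empty_or_nonempty Λ with hemp | ⟨lam0, hlam0⟩
  · have h := hcomp (Efun (0,0)) (Efun_memLp (0,0))
      (by intro l hl; rw [hemp] at hl; exact absurd hl (Set.notMem_empty l))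
    have h2 : Fc 0 0 = 0 := by
      unfold Fc
      calc (∫ p in T, Complex.exp (K 0 * p.1 + K 0 * p.2))
          = ∫ p in T, Efun (0,0) p := by
            apply MeasureTheory.integral_congr_ae
            apply Filter.Eventually.of_forall
            intro p
            unfold Efun
            simp [K]
        _ = ∫ p in T, (0:ℂ) := MeasureTheory.integral_congr_ae h
        _ = 0 := by simp
    rw [Fc_zero_zero] at h2
    norm_num at h2
  -- main case
  set c : ℂ := ((Real.sqrt 2 : ℝ) : ℂ) with hc
  set v : Λ → Lp ℂ 2 (volume.restrict T) := fun i => c • eLp (i : ℝ × ℝ) with hv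
  have hon : Orthonormal ℂ v := by
    rw [orthonormal_iff_ite]
    intro i j
    rw [hv]
    simp only []
    rw [inner_smul_left, inner_smul_right, Complex.conj_ofReal, inner_eLp]
    by_cases hij : i = j
    · subst hij
      rw [if_pos rfl, sub_self, sub_self, Fc_zero_zero, ← mul_assoc, sqrt2C_sq]
      norm_num
    · rw [if_neg hij]
      have hne : (j : ℝ × ℝ) ≠ (i : ℝ × ℝ) := fun h => hij (Subtype.ext h).symm
      rw [horthF _ j.2 _ i.2 hne, mul_zero, mul_zero]
  have horthspan : (Submodule.span ℂ (Set.range v))ᗮ = ⊥ := by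
    rw [Submodule.eq_bot_iff]
    intro g hg
    have hg' : ∀ i : Λ, ⟪eLp (i : ℝ × ℝ), g⟫ = 0 := by
      intro i
      have hvi : v i ∈ Submodule.span ℂ (Set.range v) := Submodule.subset_span ⟨i, rfl⟩
      have h0 := (Submodule.mem_orthogonal _ _).mp hg (v i) hvi
      rw [hv] at h0
      simp only [] at h0
      rw [inner_smul_left, Complex.conj_ofReal] at h0
      exact (mul_eq_zero.mp h0).resolve_left sqrt2C_ne
    have hcond : ∀ l ∈ Λ, (∫ p in T,
        (g : ℝ × ℝ → ℂ) p * (starRingEnd ℂ)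
          (Complex.exp (2 * π * Complex.I * (l.1 * p.1 + l.2 * p.2)))) = 0 := by
      intro l hl
      have h0 := hg' ⟨l, hl⟩
      rw [MeasureTheory.L2.inner_def] at h0
      rw [← h0]
      apply MeasureTheory.integral_congr_ae
      filter_upwards [(Efun_memLp l).coeFn_toLp] with p hp
      rw [RCLike.inner_apply]
      show (g : ℝ × ℝ → ℂ) p * (starRingEnd ℂ) (Efun l p)
          = (g : ℝ × ℝ → ℂ) p * (starRingEnd ℂ) ((eLp l : ℝ × ℝ → ℂ) p)
      unfold eLp
      rw [hp]
    have := hcomp (g : ℝ × ℝ → ℂ) (MeasureTheory.Lp.memLp g) hcond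
    exact (MeasureTheory.Lp.eq_zero_iff_ae_eq_zero).mpr this
  -- the Hilbert basis and Parseval
  set t0 : ℝ × ℝ := (lam0.1 + 1/2, lam0.2 + 1/2) with ht0
  set x : Lp ℂ 2 (volume.restrict T) := eLp t0 with hxdef
  have hPar := (HilbertBasis.mkOfOrthogonalEqBot hon horthspan).hasSum_inner_mul_inner x x
  rw [show ⇑(HilbertBasis.mkOfOrthogonalEqBot hon horthspan) = v from
    HilbertBasis.coe_mkOfOrthogonalEqBot hon horthspan] at hPar
  have hxx : ⟪x, x⟫ = (((1/2 : ℝ)) : ℂ) := by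
    rw [hxdef, inner_eLp, sub_self, sub_self, Fc_zero_zero]
    norm_num
  rw [hxx] at hPar
  have hterm : ∀ i : Λ, ⟪x, v i⟫ * ⟪v i, x⟫
      = ((2 * Complex.normSq (Fc (t0.1 - (i:ℝ×ℝ).1) (t0.2 - (i:ℝ×ℝ).2)) : ℝ) : ℂ) := by
    intro i
    rw [hv]
    simp only []
    rw [inner_smul_left, inner_smul_right, Complex.conj_ofReal]
    rw [← inner_conj_symm x (eLp (i:ℝ×ℝ))]
    rw [inner_eLp]
    set w := Fc (t0.1 - (i:ℝ×ℝ).1) (t0.2 - (i:ℝ×ℝ).2) with hw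
    rw [show c * (starRingEnd ℂ) w * (c * w) = (c * c) * (w * (starRingEnd ℂ) w) from by ring,
      sqrt2C_sq, Complex.mul_conj]
    push_cast
    ring
  have hPar2 : HasSum
      (fun i : Λ => 2 * Complex.normSq (Fc (t0.1 - (i:ℝ×ℝ).1) (t0.2 - (i:ℝ×ℝ).2))) (1/2 : ℝ) := by
    have hPar' : HasSum (fun i : Λ =>
        ((2 * Complex.normSq (Fc (t0.1 - (i:ℝ×ℝ).1) (t0.2 - (i:ℝ×ℝ).2)) : ℝ) : ℂ))
        (((1/2:ℝ)) : ℂ) := by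
      simpa only [hterm] using hPar
    have := ((Complex.hasSum_iff _ _).1 hPar').1
    simpa using this
  -- integer structure
  set i0 : Λ := ⟨lam0, hlam0⟩ with hi0
  have hZ : ∀ i : Λ, ∃ mi ni : ℤ,
      ((i:ℝ×ℝ).1 - lam0.1 = (mi:ℝ)) ∧ ((i:ℝ×ℝ).2 - lam0.2 = (ni:ℝ)) := by
    intro i
    by_cases hi : (i:ℝ×ℝ) = lam0
    · exact ⟨0, 0, by rw [hi]; simp, by rw [hi]; simp⟩
    · obtain ⟨⟨mi, hmi⟩, ⟨ni, hni⟩, _, _, _⟩ := Fc_zero_imp (horthF _ i.2 _ hlam0 hi)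
      exact ⟨mi, ni, hmi, hni⟩
  choose M N hM hN using hZ
  have hprop : ∀ i : Λ, i ≠ i0 → M i ≠ N i := by
    intro i hi
    have hne : (i:ℝ×ℝ) ≠ lam0 := fun h => hi (Subtype.ext h)
    obtain ⟨_, _, _, _, hab⟩ := Fc_zero_imp (horthF _ i.2 _ hlam0 hne)
    intro hMN
    apply hab
    rw [hM i, hN i, hMN]
  -- rewrite terms for i ≠ i0
  have hterm2 : ∀ i : Λ, i ≠ i0 →
      2 * Complex.normSq (Fc (t0.1 - (i:ℝ×ℝ).1) (t0.2 - (i:ℝ×ℝ).2))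
        = 2 * Complex.normSq (Fc ((1/2:ℝ) - M i) ((1/2:ℝ) - N i)) := by
    intro i hi
    have h1 : t0.1 - (i:ℝ×ℝ).1 = (1/2:ℝ) - M i := by
      have := hM i; rw [ht0]; simp only []; linarith
    have h2 : t0.2 - (i:ℝ×ℝ).2 = (1/2:ℝ) - N i := by
      have := hN i; rw [ht0]; simp only []; linarith
    rw [h1, h2]
  -- partial sums bound
  set gfun : Λ → ℝ :=
    fun i => 2 * Complex.normSq (Fc (t0.1 - (i:ℝ×ℝ).1) (t0.2 - (i:ℝ×ℝ).2)) with hgfun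
  have hgnn : ∀ i : Λ, 0 ≤ gfun i := fun i =>
    mul_nonneg (by norm_num) (Complex.normSq_nonneg _)
  have hbound : ∀ s : Finset Λ, ∑ i ∈ s, (if i = i0 then 0 else gfun i) ≤ 176/(9*π^4) := by
    intro s
    have hπ4 : (0:ℝ) < π^4 := by positivity
    have step1 : ∀ i ∈ s, (if i = i0 then 0 else gfun i)
        ≤ (4/π^4) * (1/((2*((M i):ℝ)-1)^4) + 1/((2*((N i):ℝ)-1)^4)) := by
      intro i _
      by_cases hi : i = i0
      · rw [if_pos hi]
        positivity
      · rw [if_neg hi, hgfun]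
        simp only []
        rw [hterm2 i hi]
        exact term_bound (hprop i hi)
    calc ∑ i ∈ s, (if i = i0 then 0 else gfun i)
        ≤ ∑ i ∈ s, (4/π^4) * (1/((2*((M i):ℝ)-1)^4) + 1/((2*((N i):ℝ)-1)^4)) :=
          Finset.sum_le_sum step1
      _ = (4/π^4) * ((∑ i ∈ s, 1/((2*((M i):ℝ)-1)^4)) + ∑ i ∈ s, 1/((2*((N i):ℝ)-1)^4)) := by
          rw [← Finset.sum_add_distrib, ← Finset.mul_sum]
      _ ≤ (4/π^4) * (22/9 + 22/9) := by
          apply mul_le_mul_of_nonneg_left _ (by positivity)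
          have hMsum : ∑ i ∈ s, (1:ℝ)/((2*((M i):ℝ)-1)^4) ≤ 22/9 := by
            have hMinj : ∀ i ∈ s, ∀ j ∈ s, M i = M j → i = j := by
              intro i _ j _ hij
              by_contra hne
              have hneR : (i:ℝ×ℝ) ≠ (j:ℝ×ℝ) := fun h => hne (Subtype.ext h)
              obtain ⟨_, _, hA, _, _⟩ := Fc_zero_imp (horthF _ i.2 _ j.2 hneR)
              apply hA
              have h1 := hM i
              have h2 := hM j
              have : (i:ℝ×ℝ).1 - (j:ℝ×ℝ).1 = ((M i):ℝ) - ((M j):ℝ) := by linarith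
              rw [this, hij]
              ring
            calc ∑ i ∈ s, (1:ℝ)/((2*((M i):ℝ)-1)^4)
                = ∑ k ∈ s.image M, (1:ℝ)/((2*(k:ℝ)-1)^4) :=
                  (Finset.sum_image (f := fun k : ℤ => (1:ℝ)/((2*(k:ℝ)-1)^4)) hMinj).symm
              _ ≤ 22/9 := zsum _
          have hNsum : ∑ i ∈ s, (1:ℝ)/((2*((N i):ℝ)-1)^4) ≤ 22/9 := by
            have hNinj : ∀ i ∈ s, ∀ j ∈ s, N i = N j → i = j := by
              intro i _ j _ hij
              by_contra hne
              have hneR : (i:ℝ×ℝ) ≠ (j:ℝ×ℝ) := fun h => hne (Subtype.ext h)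
              obtain ⟨_, _, _, hB, _⟩ := Fc_zero_imp (horthF _ i.2 _ j.2 hneR)
              apply hB
              have h1 := hN i
              have h2 := hN j
              have : (i:ℝ×ℝ).2 - (j:ℝ×ℝ).2 = ((N i):ℝ) - ((N j):ℝ) := by linarith
              rw [this, hij]
              ring
            calc ∑ i ∈ s, (1:ℝ)/((2*((N i):ℝ)-1)^4)
                = ∑ k ∈ s.image N, (1:ℝ)/((2*(k:ℝ)-1)^4) :=
                  (Finset.sum_image (f := fun k : ℤ => (1:ℝ)/((2*(k:ℝ)-1)^4)) hNinj).symm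
              _ ≤ 22/9 := zsum _
          linarith
      _ = 176/(9*π^4) := by field_simp; ring
  -- assemble the contradiction
  have hsum : Summable gfun := hPar2.summable
  have htsum : ∑' i, gfun i = 1/2 := hPar2.tsum_eq
  have heq := hsum.tsum_eq_add_tsum_ite i0
  have hitesummable : Summable (fun i : Λ => if i = i0 then 0 else gfun i) := by
    apply Summable.of_nonneg_of_le _ _ hsum
    · intro i
      by_cases hi : i = i0
      · rw [if_pos hi]
      · rw [if_neg hi]; exact hgnn i
    · intro i
      by_cases hi : i = i0
      · rw [if_pos hi]; exact hgnn i
      · rw [if_neg hi]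
  have hite : ∑' i : Λ, (if i = i0 then 0 else gfun i) ≤ 176/(9*π^4) :=
    hitesummable.tsum_le_of_sum_le hbound
  have hg0 : gfun i0 = (8 + 2*π^2)/π^4 := by
    rw [hgfun]
    simp only []
    rw [show lam0.1 + 1/2 - lam0.1 = (1/2:ℝ) from by ring,
      show lam0.2 + 1/2 - lam0.2 = (1/2:ℝ) from by ring]
    rw [val_diag, Complex.normSq_add_mul_I]
    have hπ : π ≠ 0 := Real.pi_ne_zero
    field_simp
    ring
  have hfinal : (1:ℝ)/2 ≤ (8 + 2*π^2)/π^4 + 176/(9*π^4) := by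
    rw [htsum] at heq
    rw [hg0] at heq
    linarith [hite, heq.le, heq.ge]
  exact absurd hfinal (not_le.mpr numeric_contra)


end TriNS

/-- The triangle with vertices `(0,0), (1,0), (0,1)` is not spectral: no set `Λ ⊆ ℝ²`
gives an orthogonal basis of exponentials for `L²(T)`. -/
theorem stmt9 :
    ¬ ∃ Λ : Set (ℝ × ℝ),
      (∀ l ∈ Λ, ∀ m ∈ Λ, l ≠ m →
        ∫ p in {q : ℝ × ℝ | 0 < q.1 ∧ 0 < q.2 ∧ q.1 + q.2 < 1},
          Complex.exp (2 * Real.pi * Complex.I * (l.1 * p.1 + l.2 * p.2)) *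
            (starRingEnd ℂ) (Complex.exp (2 * Real.pi * Complex.I * (m.1 * p.1 + m.2 * p.2)))
          = 0) ∧
      (∀ f : ℝ × ℝ → ℂ,
        MemLp f 2 (volume.restrict {q : ℝ × ℝ | 0 < q.1 ∧ 0 < q.2 ∧ q.1 + q.2 < 1}) →
        (∀ l ∈ Λ, ∫ p in {q : ℝ × ℝ | 0 < q.1 ∧ 0 < q.2 ∧ q.1 + q.2 < 1},
          f p * (starRingEnd ℂ) (Complex.exp (2 * Real.pi * Complex.I * (l.1 * p.1 + l.2 * p.2)))
          = 0) →
        f =ᵐ[volume.restrict {q : ℝ × ℝ | 0 < q.1 ∧ 0 < q.2 ∧ q.1 + q.2 < 1}] 0) := TriNS.stmt9'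
end
end

section
/- Suppose every pairwise distance between distinct points of a set Λ ⊆ ℝ^d lies in a set D ⊆ (0,∞), where D ⊆ ⋃_n {r_n} with r_n = A + Bn + o(1), B > 0. Suppose moreover Λ has minimal separation C > 0 and positive counting density. Assume the theorem that every subset of ℝ^d (d ≥ 2) of positive upper Lebesgue density realizes all sufficiently large distances. Then we have a contradiction; i.e. no such Λ exists. -/
open MeasureTheory Metric

set_option maxHeartbeats 1000000 in
/-- No uniformly separated set of positive counting density in `ℝ^d` (`d ≥ 2`) can have
all its pairwise distances within a set `D` contained in `{r n}` with `r n = A + Bn + o(1)`,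
assuming the theorem that sets of positive upper Lebesgue density realize all
sufficiently large distances. -/
theorem stmt17 (d : ℕ) (hd : 2 ≤ d) (Λ : Set (EuclideanSpace ℝ (Fin d)))
    (D : Set ℝ) (hD : D ⊆ Set.Ioi (0 : ℝ))
    (r : ℕ → ℝ) (A B : ℝ) (hB : 0 < B)
    (hasymp : Filter.Tendsto (fun n : ℕ => r n - (A + B * n)) Filter.atTop (nhds 0))
    (hDr : D ⊆ Set.range r)
    (hdist : ∀ l ∈ Λ, ∀ m ∈ Λ, l ≠ m → dist l m ∈ D)
    (C : ℝ) (hC : 0 < C)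
    (hsep : ∀ l ∈ Λ, ∀ m ∈ Λ, l ≠ m → C ≤ dist l m)
    (c : ℝ) (hc : 0 < c) (R₀ : ℝ)
    (hdens : ∀ R ≥ R₀, c * R ^ d ≤ ((Λ ∩ closedBall (0 : EuclideanSpace ℝ (Fin d)) R).ncard : ℝ))
    (hdistance_thm : ∀ E : Set (EuclideanSpace ℝ (Fin d)),
      (∃ c' > (0 : ℝ), ∀ S₀ : ℝ, ∃ S ≥ S₀, 1 ≤ S ∧ ∃ x : EuclideanSpace ℝ (Fin d),
        c' * (volume (closedBall x S)).toReal ≤ (volume (E ∩ closedBall x S)).toReal) →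
      ∃ t₀ : ℝ, ∀ t ≥ t₀, ∃ x ∈ E, ∃ y ∈ E, dist x y = t) :
    False := by
  have hd0 : 0 < d := by omega
  haveI : Nonempty (Fin d) := ⟨⟨0, hd0⟩⟩
  haveI : Nontrivial (EuclideanSpace ℝ (Fin d)) := by
    refine ⟨EuclideanSpace.single ⟨0, hd0⟩ (1 : ℝ), 0, fun h => ?_⟩
    have := congrArg (fun v => v ⟨0, hd0⟩) h
    simp [EuclideanSpace.single] at this
  -- the small radius
  set ε : ℝ := min B (min C 1) / 10 with hεdef
  have hmin : 0 < min B (min C 1) := lt_min hB (lt_min hC one_pos)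
  have hε : 0 < ε := by positivity
  have hεB : ε ≤ B / 10 := by
    have : min B (min C 1) ≤ B := min_le_left _ _
    rw [hεdef]; linarith
  have hεC : ε ≤ C / 10 := by
    have h1 : min B (min C 1) ≤ min C 1 := min_le_right _ _
    have h2 : min C 1 ≤ C := min_le_left _ _
    rw [hεdef]; linarith
  have hε1 : ε ≤ 1 / 10 := by
    have h1 : min B (min C 1) ≤ min C 1 := min_le_right _ _
    have h2 : min C 1 ≤ 1 := min_le_right _ _
    rw [hεdef]; linarith
  -- the thickened set
  set E : Set (EuclideanSpace ℝ (Fin d)) := ⋃ l ∈ Λ, ball l ε with hEdef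
  -- Step 1: E has positive upper density
  have hdenE : ∃ c' > (0 : ℝ), ∀ S₀ : ℝ, ∃ S ≥ S₀, 1 ≤ S ∧ ∃ x : EuclideanSpace ℝ (Fin d),
      c' * (volume (closedBall x S)).toReal ≤ (volume (E ∩ closedBall x S)).toReal := by
    refine ⟨c * ε ^ d / 2 ^ d, by positivity, fun S₀ => ?_⟩
    set R : ℝ := max R₀ (max S₀ 1) with hRdef
    have hR1 : 1 ≤ R := le_max_of_le_right (le_max_right _ _)
    have hRS₀ : S₀ ≤ R := le_max_of_le_right (le_max_left _ _)
    have hRR₀ : R₀ ≤ R := le_max_left _ _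
    have hR0 : 0 < R := lt_of_lt_of_le one_pos hR1
    refine ⟨R + ε, by linarith, by linarith, 0, ?_⟩
    have hcard := hdens R hRR₀
    have hRd : (1 : ℝ) ≤ R ^ d := by
      calc (1 : ℝ) = 1 ^ d := (one_pow d).symm
        _ ≤ R ^ d := pow_le_pow_left₀ zero_le_one hR1 d
    have hfin : (Λ ∩ closedBall (0 : EuclideanSpace ℝ (Fin d)) R).Finite := by
      by_contra hinf
      rw [Set.Infinite.ncard hinf] at hcard
      push_cast at hcard
      nlinarith
    set F : Finset (EuclideanSpace ℝ (Fin d)) := hfin.toFinset with hFdef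
    have hFcard : (Λ ∩ closedBall (0 : EuclideanSpace ℝ (Fin d)) R).ncard = F.card := by
      rw [Set.ncard_eq_toFinset_card _ hfin]
    -- disjointness of small balls
    have hdisj : (F : Set (EuclideanSpace ℝ (Fin d))).Pairwise
        (Function.onFun Disjoint fun l => ball l ε) := by
      intro l hl p hp hlp
      have hlΛ : l ∈ Λ := (hfin.mem_toFinset.mp hl).1
      have hpΛ : p ∈ Λ := (hfin.mem_toFinset.mp hp).1
      have hsep' := hsep l hlΛ p hpΛ hlp
      exact ball_disjoint_ball (by linarith)
    have hmeas : volume (⋃ l ∈ F, ball l ε)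
        = (F.card : ENNReal) * (ENNReal.ofReal (ε ^ d) * volume (ball (0 : EuclideanSpace ℝ (Fin d)) 1)) := by
      rw [measure_biUnion_finset hdisj (fun l _ => measurableSet_ball)]
      rw [Finset.sum_congr rfl (fun l _ => by
        rw [Measure.addHaar_ball volume l hε.le, finrank_euclideanSpace_fin])]
      rw [Finset.sum_const, nsmul_eq_mul]
    have hsub : (⋃ l ∈ F, ball l ε) ⊆ E ∩ closedBall (0 : EuclideanSpace ℝ (Fin d)) (R + ε) := by
      intro x hx
      simp only [Set.mem_iUnion] at hx
      obtain ⟨l, hlF, hxl⟩ := hx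
      obtain ⟨hlΛ, hlB⟩ := hfin.mem_toFinset.mp hlF
      refine ⟨Set.mem_biUnion hlΛ hxl, ?_⟩
      rw [mem_closedBall] at hlB ⊢
      have hxl' : dist x l < ε := mem_ball.mp hxl
      calc dist x 0 ≤ dist x l + dist l 0 := dist_triangle _ _ _
        _ ≤ R + ε := by linarith
    have hcb : volume (closedBall (0 : EuclideanSpace ℝ (Fin d)) (R + ε))
        = ENNReal.ofReal ((R + ε) ^ d) * volume (ball (0 : EuclideanSpace ℝ (Fin d)) 1) := by
      rw [Measure.addHaar_closedBall volume _ (by linarith), finrank_euclideanSpace_fin]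
    have key : ENNReal.ofReal (c * ε ^ d / 2 ^ d)
        * volume (closedBall (0 : EuclideanSpace ℝ (Fin d)) (R + ε))
        ≤ volume (E ∩ closedBall (0 : EuclideanSpace ℝ (Fin d)) (R + ε)) := by
      calc ENNReal.ofReal (c * ε ^ d / 2 ^ d)
            * volume (closedBall (0 : EuclideanSpace ℝ (Fin d)) (R + ε))
          = ENNReal.ofReal (c * ε ^ d / 2 ^ d * (R + ε) ^ d)
              * volume (ball (0 : EuclideanSpace ℝ (Fin d)) 1) := by
            rw [hcb, ← mul_assoc, ← ENNReal.ofReal_mul (by positivity)]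
        _ ≤ ENNReal.ofReal ((F.card : ℝ) * ε ^ d)
              * volume (ball (0 : EuclideanSpace ℝ (Fin d)) 1) := by
            refine mul_le_mul_left (ENNReal.ofReal_le_ofReal ?_) _
            have hS2 : R + ε ≤ 2 * R := by linarith
            have h2 : (R + ε) ^ d ≤ (2 * R) ^ d := pow_le_pow_left₀ (by linarith) hS2 d
            have h3 : (2 * R) ^ d = 2 ^ d * R ^ d := mul_pow 2 R d
            have h4 : c * R ^ d ≤ (F.card : ℝ) := by
              rw [hFcard] at hcard; exact hcard
            have h2d : (0 : ℝ) < 2 ^ d := by positivity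
            calc c * ε ^ d / 2 ^ d * (R + ε) ^ d
                ≤ c * ε ^ d / 2 ^ d * (2 ^ d * R ^ d) :=
                  mul_le_mul_of_nonneg_left (h2.trans_eq h3) (by positivity)
              _ = c * R ^ d * ε ^ d := by field_simp
              _ ≤ (F.card : ℝ) * ε ^ d :=
                  mul_le_mul_of_nonneg_right h4 (by positivity)
        _ = (F.card : ENNReal) * (ENNReal.ofReal (ε ^ d)
              * volume (ball (0 : EuclideanSpace ℝ (Fin d)) 1)) := by
            rw [ENNReal.ofReal_mul (by positivity), ENNReal.ofReal_natCast, mul_assoc]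
        _ = volume (⋃ l ∈ F, ball l ε) := hmeas.symm
        _ ≤ volume (E ∩ closedBall (0 : EuclideanSpace ℝ (Fin d)) (R + ε)) :=
            measure_mono hsub
    have hfin2 : volume (E ∩ closedBall (0 : EuclideanSpace ℝ (Fin d)) (R + ε)) ≠ ⊤ :=
      (lt_of_le_of_lt (measure_mono Set.inter_subset_right) measure_closedBall_lt_top).ne
    have hmono := ENNReal.toReal_mono hfin2 key
    rwa [ENNReal.toReal_mul, ENNReal.toReal_ofReal (by positivity)] at hmono
  -- Step 2: derive contradiction
  obtain ⟨t₀, ht₀⟩ := hdistance_thm E hdenE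
  obtain ⟨N, hN⟩ := (Metric.tendsto_atTop.mp hasymp) (B / 10) (by positivity)
  set M : ℝ := ∑ n ∈ Finset.range N, |r n| with hMdef
  have hM0 : 0 ≤ M := Finset.sum_nonneg fun _ _ => abs_nonneg _
  have hrM : ∀ n < N, r n ≤ M := fun n hn =>
    (le_abs_self _).trans (Finset.single_le_sum (fun i _ => abs_nonneg (r i))
      (Finset.mem_range.mpr hn))
  set T : ℝ := max t₀ (M + 2 * ε + 1) with hTdef
  obtain ⟨m₀, hm₀⟩ := exists_nat_ge ((T - A) / B)
  set m : ℕ := max m₀ N with hmdef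
  set t : ℝ := A + B * (m + 1 / 2) with htdef
  have hmm₀ : (m₀ : ℝ) ≤ m := Nat.cast_le.mpr (le_max_left _ _)
  have hmN : N ≤ m := le_max_right _ _
  have htT : T ≤ t := by
    rw [div_le_iff₀ hB] at hm₀
    have h5 : B * m₀ ≤ B * m := mul_le_mul_of_nonneg_left hmm₀ hB.le
    rw [htdef]; nlinarith
  have htbig : M + 2 * ε + 1 ≤ t := (le_max_right t₀ _).trans htT
  obtain ⟨x, hx, y, hy, hxy⟩ := ht₀ t ((le_max_left t₀ _).trans htT)
  rw [hEdef] at hx hy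
  simp only [Set.mem_iUnion, mem_ball] at hx hy
  obtain ⟨l, hlΛ, hxl⟩ := hx
  obtain ⟨p, hpΛ, hyp⟩ := hy
  have hlx : dist l x < ε := by rw [dist_comm]; exact hxl
  have hpy : dist p y < ε := by rw [dist_comm]; exact hyp
  by_cases hlp : l = p
  · subst hlp
    have hsmall : dist x y < 2 * ε := by
      calc dist x y ≤ dist x l + dist l y := dist_triangle _ _ _
        _ < 2 * ε := by rw [dist_comm l y]; linarith
    rw [hxy] at hsmall
    linarith
  · obtain ⟨n, hrn⟩ := hDr (hdist l hlΛ p hpΛ hlp)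
    -- hrn : r n = dist l p
    have hclose : |t - r n| < 2 * ε := by
      have h1 : dist x y ≤ dist x l + dist l p + dist p y := dist_triangle4 x l p y
      have h2 : dist l p ≤ dist l x + dist x y + dist y p := dist_triangle4 l x y p
      rw [hxy] at h1 h2
      rw [dist_comm y p] at h2
      rw [← hrn] at h1 h2
      rw [abs_lt]
      constructor <;> linarith
    by_cases hnN : n < N
    · have hr1 := hrM n hnN
      have hr2 : t - r n < 2 * ε := (le_abs_self _).trans_lt hclose
      linarith
    · push_neg at hnN
      have h6 := hN n hnN
      rw [Real.dist_eq, sub_zero] at h6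
      have h7 : B / 2 ≤ |t - (A + B * n)| := by
        have heq : t - (A + B * n) = B * ((m : ℝ) + 1 / 2 - n) := by rw [htdef]; ring
        rw [heq, abs_mul, abs_of_pos hB]
        have h8 : (1 : ℝ) / 2 ≤ |(m : ℝ) + 1 / 2 - n| := by
          rcases le_or_gt n m with h | h
          · have hnm : (n : ℝ) ≤ m := Nat.cast_le.mpr h
            rw [abs_of_nonneg (by linarith)]; linarith
          · have hmn : (m : ℝ) + 1 ≤ n := by exact_mod_cast h
            rw [abs_of_nonpos (by linarith)]; linarith
        nlinarith
      have h9 : |t - (A + B * n)| - |r n - (A + B * n)| ≤ |t - r n| := by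
        have h10 := abs_sub_abs_le_abs_sub (t - (A + B * n)) (r n - (A + B * n))
        rwa [sub_sub_sub_cancel_right] at h10
      linarith
end
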